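/- Suppose all individuals have utility 1 and are sorted so q_1 ≥ q_2 ≥ ... ≥ q_n. Then there exists an optimal non-overlapping testing regime whose tests are consecutive intervals: test sizes can be ordered decreasingly and test j pools the individuals with indices Σ_{j'<j}|t_{j'}|+1 through Σ_{j'<j}|t_{j'}|+|t_j|. -/

import Mathlib

open Finset

/-- Probability of a health realization `ω` (true = healthy) under independent
healthy-probabilities `q`. -/
noncomputable def healthProb {n : ℕ} (q : Fin n → ℝ) (ω : Fin n → Bool) : ℝ :=
  ∏ i, if ω i then q i else 1 - q i

/-- Probability that individual `i` lies in at least one negative test of the regime `T`. -/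
noncomputable def inNegProb {n B : ℕ} (q : Fin n → ℝ) (T : Fin B → Finset (Fin n))
    (i : Fin n) : ℝ :=
  ∑ ω : Fin n → Bool,
    if ∃ j, i ∈ T j ∧ ∀ k ∈ T j, ω k = true then healthProb q ω else 0

/-- Expected welfare of a (possibly overlapping) testing regime `T`. -/
noncomputable def welfare {n B : ℕ} (q u : Fin n → ℝ) (T : Fin B → Finset (Fin n)) : ℝ :=
  ∑ i, u i * inNegProb q T i

/-- Stand-alone expected welfare of a single pooled test `t`. -/
noncomputable def testWelfare {n : ℕ} (q u : Fin n → ℝ) (t : Finset (Fin n)) : ℝ :=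
  (∏ i ∈ t, q i) * ∑ i ∈ t, u i

/-- Welfare of a non-overlapping testing regime, as a sum of stand-alone test welfares. -/
noncomputable def noWelfare {n B : ℕ} (q u : Fin n → ℝ) (T : Fin B → Finset (Fin n)) : ℝ :=
  ∑ j, testWelfare q u (T j)

/-- Probability that test `T j` is pivotal for individual `i`: `i ∈ T j`, test `T j` is
negative, and every earlier test containing `i` is positive. -/
noncomputable def pivotalProb {n B : ℕ} (q : Fin n → ℝ) (T : Fin B → Finset (Fin n))
    (i : Fin n) (j : Fin B) : ℝ :=
  ∑ ω : Fin n → Bool,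
    if i ∈ T j ∧ (∀ k ∈ T j, ω k = true) ∧
        (∀ j' : Fin B, j' < j → i ∈ T j' → ∃ k ∈ T j', ω k = false)
      then healthProb q ω else 0


namespace S14
variable {n : ℕ}

/-- the `k` smallest elements of `S` -/
def low (S : Finset (Fin n)) (k : ℕ) : Finset (Fin n) :=
  ((S.sort (·≤·)).take k).toFinset

lemma low_subset (S : Finset (Fin n)) (k : ℕ) : low S k ⊆ S := by
  intro x hx
  rw [low, List.mem_toFinset] at hx
  exact (Finset.mem_sort (α := Fin n) (·≤·)).mp (List.mem_of_mem_take hx)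

lemma low_card (S : Finset (Fin n)) (k : ℕ) (hk : k ≤ S.card) : (low S k).card = k := by
  rw [low, List.toFinset_card_of_nodup ((S.sort_nodup (·≤·)).sublist (List.take_sublist _ _))]
  rw [List.length_take, Finset.length_sort]
  omega

lemma low_lt (S : Finset (Fin n)) (k : ℕ) {x y : Fin n} (hx : x ∈ low S k)
    (hy : y ∈ S) (hy' : y ∉ low S k) : x < y := by
  rw [low, List.mem_toFinset] at hx hy'
  have hyl : y ∈ (S.sort (·≤·)).drop k := by
    have : y ∈ S.sort (·≤·) := (Finset.mem_sort (α := Fin n) (·≤·)).mpr hy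
    rw [← List.take_append_drop k (S.sort (·≤·)), List.mem_append] at this
    tauto
  have hsorted : ((S.sort (·≤·)).take k ++ (S.sort (·≤·)).drop k).Pairwise (·≤·) := by
    rw [List.take_append_drop]; exact S.pairwise_sort (·≤·)
  have hnd : ((S.sort (·≤·)).take k ++ (S.sort (·≤·)).drop k).Nodup := by
    rw [List.take_append_drop]; exact S.sort_nodup (·≤·)
  have h1 := (List.pairwise_append.mp hsorted).2.2 x hx y hyl
  have h2 := (List.pairwise_append.mp hnd).2.2 x hx y hyl
  exact lt_of_le_of_ne h1 h2

variable (q : Fin n → ℝ)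

/-- product domination: if `A` and `B` have the same size and every element of `A`
is below every element of `B`, then (for antitone `q` in `[0,1]`) `∏ B ≤ ∏ A`. -/
lemma prod_dom (hq : ∀ i, 0 ≤ q i ∧ q i ≤ 1) (hs : ∀ i j : Fin n, i ≤ j → q j ≤ q i)
    {A C : Finset (Fin n)} (hcard : A.card = C.card)
    (hlt : ∀ a ∈ A, ∀ c ∈ C, a < c) : ∏ i ∈ C, q i ≤ ∏ i ∈ A, q i := by
  rcases A.eq_empty_or_nonempty with rfl | hA
  · have : C = ∅ := Finset.card_eq_zero.mp hcard.symm
    subst this; simp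
  · have hC : C.Nonempty := Finset.card_pos.mp (hcard ▸ Finset.card_pos.mpr hA)
    have h1 : ∏ i ∈ C, q i ≤ (q (C.min' hC)) ^ C.card := by
      calc ∏ i ∈ C, q i ≤ ∏ _i ∈ C, q (C.min' hC) := by
            refine Finset.prod_le_prod (fun i _ => (hq i).1) ?_
            intro x hx; exact hs _ _ (C.min'_le x hx)
        _ = (q (C.min' hC)) ^ C.card := by rw [Finset.prod_const]
    have h2 : (q (C.min' hC)) ^ C.card ≤ (q (A.max' hA)) ^ A.card := by
      rw [hcard]
      refine pow_le_pow_left₀ (hq _).1 ?_ _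
      exact hs _ _ (le_of_lt (hlt _ (A.max'_mem hA) _ (C.min'_mem hC)))
    have h3 : (q (A.max' hA)) ^ A.card ≤ ∏ i ∈ A, q i := by
      calc (q (A.max' hA)) ^ A.card = ∏ _i ∈ A, q (A.max' hA) := by rw [Finset.prod_const]
        _ ≤ ∏ i ∈ A, q i := by
            refine Finset.prod_le_prod (fun i _ => (hq _).1) ?_
            intro x hx; exact hs _ _ (A.le_max' x hx)
    linarith

lemma prod_q_nonneg (hq : ∀ i, 0 ≤ q i ∧ q i ≤ 1) (t : Finset (Fin n)) :
    0 ≤ ∏ i ∈ t, q i :=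
  Finset.prod_nonneg (fun i _ => (hq i).1)

/-- Key inequality: `s_a * ∏ t_a ≤ s_b * ∏ X` where `X` is the set of the `s_b` smallest
elements of `t_a ∪ t_b`, given that all members of `t_b` have `q ≥ 1 - 1/s_b`. -/
lemma key_ineq (hq : ∀ i, 0 ≤ q i ∧ q i ≤ 1) (hs : ∀ i j : Fin n, i ≤ j → q j ≤ q i)
    {ta tb : Finset (Fin n)} (hdisj : Disjoint ta tb) (hcard : ta.card ≤ tb.card)
    (hmem : ∀ i ∈ tb, 1 - 1/(tb.card : ℝ) ≤ q i) :
    (ta.card : ℝ) * ∏ i ∈ ta, q i ≤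
      (tb.card : ℝ) * ∏ i ∈ low (ta ∪ tb) tb.card, q i := by
  set sa := ta.card with hsa
  set sb := tb.card with hsb
  rcases Nat.eq_zero_or_pos sb with h0 | hpos
  · have : sa = 0 := by omega
    rw [this, h0]; simp
  set S := ta ∪ tb with hS
  set X := low S sb with hX
  have hScard : S.card = sa + sb := by
    rw [hS, Finset.card_union_of_disjoint hdisj]
  have hXS : X ⊆ S := low_subset S sb
  have hXcard : X.card = sb := low_card S sb (by omega)
  set A1 := ta ∩ X with hA1
  set A2 := ta \ X with hA2
  set B1 := tb ∩ X with hB1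
  have hA1X : A1 ⊆ X := Finset.inter_subset_right
  have hB1X : B1 ⊆ X := Finset.inter_subset_right
  have hXab : X = A1 ∪ B1 := by
    ext x; simp only [hA1, hB1, Finset.mem_union, Finset.mem_inter]
    constructor
    · intro hx
      have : x ∈ S := hXS hx
      rw [hS, Finset.mem_union] at this
      tauto
    · tauto
  have hdAB : Disjoint A1 B1 :=
    Finset.disjoint_of_subset_left Finset.inter_subset_left
      (Finset.disjoint_of_subset_right Finset.inter_subset_left hdisj)
  have hcard1 : A1.card + B1.card = sb := by
    rw [← hXcard, hXab, Finset.card_union_of_disjoint hdAB]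
  have hta : ta = A1 ∪ A2 := by
    rw [hA1, hA2]
    ext x; simp only [Finset.mem_union, Finset.mem_inter, Finset.mem_sdiff]; tauto
  have hdA12 : Disjoint A1 A2 := by
    rw [hA1, hA2]
    exact Finset.disjoint_of_subset_left Finset.inter_subset_right disjoint_sdiff
  have hcard2 : A1.card + A2.card = sa := by
    rw [hsa, hta, Finset.card_union_of_disjoint hdA12]
  have hA1sa : A1.card ≤ sa := by omega
  have hA2B1 : A2.card ≤ B1.card := by omega
  obtain ⟨B2, hB2sub, hB2card⟩ := Finset.exists_subset_card_eq hA2B1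
  -- ∏ A2 ≤ ∏ B2
  have hprodA2B2 : ∏ i ∈ A2, q i ≤ ∏ i ∈ B2, q i := by
    refine prod_dom q hq hs hB2card ?_
    intro b hb a ha
    refine low_lt S sb (hB1X (hB2sub hb)) ?_ ?_
    · exact (Finset.sdiff_subset.trans Finset.subset_union_left) ha
    · exact (Finset.mem_sdiff.mp ha).2
  -- lower bound on ∏ (B1 \ B2)
  set r : ℝ := 1 - 1/(sb:ℝ) with hr
  have hrpos : 0 ≤ r := by
    rw [hr]
    have h1 : (1:ℝ) ≤ (sb:ℝ) := by exact_mod_cast hpos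
    have : 1/(sb:ℝ) ≤ 1 := by
      rw [div_le_one (by linarith)]; linarith
    linarith
  set κ := sb - sa with hκ
  have hB12card : (B1 \ B2).card = κ := by
    rw [Finset.card_sdiff_of_subset hB2sub, hB2card]; omega
  have hpow : r ^ κ ≤ ∏ i ∈ B1 \ B2, q i := by
    calc r ^ κ = ∏ _i ∈ B1 \ B2, r := by rw [Finset.prod_const, hB12card]
      _ ≤ ∏ i ∈ B1 \ B2, q i := by
          refine Finset.prod_le_prod (fun _ _ => hrpos) ?_
          intro x hx
          exact hmem x (Finset.inter_subset_left ((Finset.mem_sdiff.mp hx).1))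
  -- Bernoulli
  have hbern : (sa : ℝ) ≤ (sb : ℝ) * r ^ κ := by
    have h2 : (-2 : ℝ) ≤ -(1/(sb:ℝ)) := by
      have h1 : (1:ℝ) ≤ (sb:ℝ) := by exact_mod_cast hpos
      have : 1/(sb:ℝ) ≤ 1 := by rw [div_le_one (by linarith)]; linarith
      linarith
    have := one_add_mul_le_pow h2 κ
    have heq : (1 : ℝ) + -(1/(sb:ℝ)) = r := by rw [hr]; ring
    rw [heq] at this
    have hκle : (κ : ℝ) ≤ (sb : ℝ) := by exact_mod_cast (by omega : κ ≤ sb)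
    have hsbpos : (0:ℝ) < (sb:ℝ) := by exact_mod_cast hpos
    have h3 : (sb:ℝ) * (1 + (κ:ℝ) * -(1/(sb:ℝ))) ≤ (sb:ℝ) * r ^ κ :=
      mul_le_mul_of_nonneg_left this (le_of_lt hsbpos)
    have h4 : (sb:ℝ) * (1 + (κ:ℝ) * -(1/(sb:ℝ))) = (sb:ℝ) - (κ:ℝ) := by
      field_simp; ring
    rw [h4] at h3
    have h5 : (sa : ℝ) = (sb:ℝ) - (κ:ℝ) := by
      have : (κ:ℝ) = (sb:ℝ) - (sa:ℝ) := by
        rw [hκ]; push_cast [Nat.cast_sub hcard]; ring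
      linarith
    linarith
  -- combine
  have hPA2 : 0 ≤ ∏ i ∈ A2, q i := prod_q_nonneg q hq A2
  have hPB2 : 0 ≤ ∏ i ∈ B2, q i := prod_q_nonneg q hq B2
  have hPA1 : 0 ≤ ∏ i ∈ A1, q i := prod_q_nonneg q hq A1
  have step1 : (sa:ℝ) * ∏ i ∈ A2, q i ≤ ((sb:ℝ) * r ^ κ) * ∏ i ∈ B2, q i :=
    mul_le_mul hbern hprodA2B2 hPA2 (mul_nonneg (Nat.cast_nonneg _) (pow_nonneg hrpos _))
  have step2 : ((sb:ℝ) * r ^ κ) * ∏ i ∈ B2, q i ≤ (sb:ℝ) * ((∏ i ∈ B1 \ B2, q i) * ∏ i ∈ B2, q i) := by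
    rw [mul_assoc]
    refine mul_le_mul_of_nonneg_left ?_ (Nat.cast_nonneg _)
    exact mul_le_mul_of_nonneg_right hpow hPB2
  have hB1prod : (∏ i ∈ B1 \ B2, q i) * ∏ i ∈ B2, q i = ∏ i ∈ B1, q i :=
    Finset.prod_sdiff hB2sub
  rw [hB1prod] at step2
  have step3 : (sa:ℝ) * ∏ i ∈ A2, q i ≤ (sb:ℝ) * ∏ i ∈ B1, q i := le_trans step1 step2
  have hXprod : ∏ i ∈ X, q i = (∏ i ∈ A1, q i) * ∏ i ∈ B1, q i := by
    rw [hXab, Finset.prod_union hdAB]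
  have htaprod : ∏ i ∈ ta, q i = (∏ i ∈ A1, q i) * ∏ i ∈ A2, q i := by
    rw [hta, Finset.prod_union hdA12]
  calc (sa : ℝ) * ∏ i ∈ ta, q i = (∏ i ∈ A1, q i) * ((sa:ℝ) * ∏ i ∈ A2, q i) := by
        rw [htaprod]; ring
    _ ≤ (∏ i ∈ A1, q i) * ((sb:ℝ) * ∏ i ∈ B1, q i) :=
        mul_le_mul_of_nonneg_left step3 hPA1
    _ = (sb : ℝ) * ∏ i ∈ X, q i := by rw [hXprod]; ring

/-- Pair sorting: replacing disjoint tests `ta, tb` (with `|ta| ≤ |tb|`) by the tests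
`Y` (top `|ta|` elements) and `X` (bottom `|tb|` elements) of `ta ∪ tb` weakly
increases total welfare, provided members of `tb` satisfy `q ≥ 1 - 1/|tb|`. -/
lemma pair_sort (hq : ∀ i, 0 ≤ q i ∧ q i ≤ 1) (hs : ∀ i j : Fin n, i ≤ j → q j ≤ q i)
    {ta tb : Finset (Fin n)} (hdisj : Disjoint ta tb) (hcard : ta.card ≤ tb.card)
    (hmem : ∀ i ∈ tb, 1 - 1/(tb.card : ℝ) ≤ q i) :
    (ta.card : ℝ) * ∏ i ∈ ta, q i + (tb.card : ℝ) * ∏ i ∈ tb, q i ≤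
      (ta.card : ℝ) * (∏ i ∈ (ta ∪ tb) \ low (ta ∪ tb) tb.card, q i) +
      (tb.card : ℝ) * ∏ i ∈ low (ta ∪ tb) tb.card, q i := by
  set sa := ta.card with hsa
  set sb := tb.card with hsb
  rcases Nat.eq_zero_or_pos sb with h0 | hpos
  · have h0' : sa = 0 := by omega
    rw [h0, h0']; simp
  set S := ta ∪ tb with hS
  set X := low S sb with hX
  set Y := S \ X with hY
  have hScard : S.card = sa + sb := by
    rw [hS, Finset.card_union_of_disjoint hdisj]
  have hXS : X ⊆ S := low_subset S sb
  have hXcard : X.card = sb := low_card S sb (by omega)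
  set A1 := ta ∩ X with hA1
  set A2 := ta \ X with hA2
  set B1 := tb ∩ X with hB1
  set B2 := tb \ X with hB2
  have hXab : X = A1 ∪ B1 := by
    ext x; simp only [hA1, hB1, Finset.mem_union, Finset.mem_inter]
    constructor
    · intro hx
      have : x ∈ S := hXS hx
      rw [hS, Finset.mem_union] at this
      tauto
    · tauto
  have hYab : Y = A2 ∪ B2 := by
    ext x; simp only [hY, hA2, hB2, Finset.mem_union, Finset.mem_sdiff, hS]
    tauto
  have hdAB : Disjoint A1 B1 :=
    Finset.disjoint_of_subset_left Finset.inter_subset_left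
      (Finset.disjoint_of_subset_right Finset.inter_subset_left hdisj)
  have hdAB2 : Disjoint A2 B2 :=
    Finset.disjoint_of_subset_left Finset.sdiff_subset
      (Finset.disjoint_of_subset_right Finset.sdiff_subset hdisj)
  have hdA12 : Disjoint A1 A2 :=
    Finset.disjoint_of_subset_left Finset.inter_subset_right disjoint_sdiff
  have hdB12 : Disjoint B1 B2 :=
    Finset.disjoint_of_subset_left Finset.inter_subset_right disjoint_sdiff
  have hta : ta = A1 ∪ A2 := by
    rw [hA1, hA2]; ext x
    simp only [Finset.mem_union, Finset.mem_inter, Finset.mem_sdiff]; tauto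
  have htb : tb = B1 ∪ B2 := by
    rw [hB1, hB2]; ext x
    simp only [Finset.mem_union, Finset.mem_inter, Finset.mem_sdiff]; tauto
  have hcard1 : A1.card + B1.card = sb := by
    rw [← hXcard, hXab, Finset.card_union_of_disjoint hdAB]
  have hcardta : A1.card + A2.card = sa := by
    rw [hsa, hta, Finset.card_union_of_disjoint hdA12]
  have hcardtb : B1.card + B2.card = sb := by
    rw [hsb, htb, Finset.card_union_of_disjoint hdB12]
  have hB2A1 : B2.card = A1.card := by omega
  -- ∏ tb ≤ ∏ X
  have hB2leA1 : ∏ i ∈ B2, q i ≤ ∏ i ∈ A1, q i := by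
    refine prod_dom q hq hs hB2A1.symm ?_
    intro a ha c hc
    refine low_lt S sb (Finset.inter_subset_right ha) ?_ ?_
    · exact (Finset.sdiff_subset.trans Finset.subset_union_right) hc
    · exact (Finset.mem_sdiff.mp hc).2
  have hPbX : ∏ i ∈ tb, q i ≤ ∏ i ∈ X, q i := by
    rw [htb, hXab, Finset.prod_union hdB12, Finset.prod_union hdAB]
    calc (∏ i ∈ B1, q i) * ∏ i ∈ B2, q i ≤ (∏ i ∈ B1, q i) * ∏ i ∈ A1, q i :=
          mul_le_mul_of_nonneg_left hB2leA1 (prod_q_nonneg q hq B1)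
      _ = (∏ i ∈ A1, q i) * ∏ i ∈ B1, q i := mul_comm _ _
  -- ∏ Y ≤ ∏ ta
  have hPYa : ∏ i ∈ Y, q i ≤ ∏ i ∈ ta, q i := by
    rw [hYab, hta, Finset.prod_union hdAB2, Finset.prod_union hdA12]
    calc (∏ i ∈ A2, q i) * ∏ i ∈ B2, q i ≤ (∏ i ∈ A2, q i) * ∏ i ∈ A1, q i :=
          mul_le_mul_of_nonneg_left hB2leA1 (prod_q_nonneg q hq A2)
      _ = (∏ i ∈ A1, q i) * ∏ i ∈ A2, q i := mul_comm _ _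
  -- products multiply to the same thing
  have hprodeq : (∏ i ∈ X, q i) * (∏ i ∈ Y, q i) = (∏ i ∈ ta, q i) * (∏ i ∈ tb, q i) := by
    rw [hXab, hYab, hta, htb, Finset.prod_union hdAB, Finset.prod_union hdAB2,
      Finset.prod_union hdA12, Finset.prod_union hdB12]
    ring
  have hkey : (sa : ℝ) * ∏ i ∈ ta, q i ≤ (sb : ℝ) * ∏ i ∈ X, q i :=
    key_ineq q hq hs hdisj hcard hmem
  have hPX : 0 ≤ ∏ i ∈ X, q i := prod_q_nonneg q hq X
  have hPY : 0 ≤ ∏ i ∈ Y, q i := prod_q_nonneg q hq Y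
  have hPa : 0 ≤ ∏ i ∈ ta, q i := prod_q_nonneg q hq ta
  have hPb : 0 ≤ ∏ i ∈ tb, q i := prod_q_nonneg q hq tb
  rcases eq_or_lt_of_le hPX with h0' | hPXpos
  · have hPb0 : ∏ i ∈ tb, q i = 0 := le_antisymm (h0' ▸ hPbX) hPb
    have hsaPa : (sa:ℝ) * ∏ i ∈ ta, q i ≤ 0 := by rw [← h0'] at hkey; simpa using hkey
    have : 0 ≤ (sa:ℝ) * ∏ i ∈ Y, q i := mul_nonneg (Nat.cast_nonneg _) hPY
    rw [hPb0, ← h0']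
    nlinarith
  · nlinarith [mul_nonneg (sub_nonneg.2 hPbX) (sub_nonneg.2 hkey)]

/-- `low S k` strictly minimizes `∑ (i+1)` among `k`-subsets of `S`. -/
lemma low_sum_lt {S C : Finset (Fin n)} {k : ℕ} (hC : C ⊆ S) (hCcard : C.card = k)
    (hk : k ≤ S.card) (hne : C ≠ low S k) :
    ∑ i ∈ low S k, ((i : ℕ) + 1) < ∑ i ∈ C, ((i : ℕ) + 1) := by
  set X := low S k with hX
  have hXcard : X.card = k := low_card S k hk
  have hcards : (X \ C).card = (C \ X).card := by
    have h1 := Finset.card_sdiff_add_card_inter X C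
    have h2 := Finset.card_sdiff_add_card_inter C X
    rw [Finset.inter_comm] at h2
    omega
  have hD1ne : (X \ C).Nonempty := by
    rcases Finset.eq_empty_or_nonempty (X \ C) with h | h
    · exfalso
      have hXC : X ⊆ C := by
        intro x hx
        by_contra hxc
        exact Finset.notMem_empty x (h ▸ Finset.mem_sdiff.mpr ⟨hx, hxc⟩)
      exact hne (Finset.eq_of_subset_of_card_le hXC (by omega)).symm
    · exact h
  have hD2ne : (C \ X).Nonempty := Finset.card_pos.mp (hcards ▸ Finset.card_pos.mpr hD1ne)
  have hlt : ∀ a ∈ X \ C, ∀ b ∈ C \ X, a < b := by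
    intro a ha b hb
    exact low_lt S k (Finset.mem_sdiff.mp ha).1 (hC (Finset.mem_sdiff.mp hb).1)
      (Finset.mem_sdiff.mp hb).2
  have hsum : ∑ i ∈ X \ C, ((i:ℕ)+1) < ∑ i ∈ C \ X, ((i:ℕ)+1) := by
    have hub : ∑ i ∈ X \ C, ((i:ℕ)+1) ≤ (X \ C).card * ((((X \ C).max' hD1ne) : ℕ) + 1) := by
      have := Finset.sum_le_card_nsmul (X \ C) (fun i => (i:ℕ)+1)
          ((((X \ C).max' hD1ne) : ℕ) + 1) ?_
      · simpa using this
      · intro x hx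
        have h := (X \ C).le_max' x hx
        rw [Fin.le_def] at h
        show (x:ℕ) + 1 ≤ (((X \ C).max' hD1ne) : ℕ) + 1
        omega
    have hlb : (C \ X).card * ((((C \ X).min' hD2ne) : ℕ) + 1) ≤ ∑ i ∈ C \ X, ((i:ℕ)+1) := by
      have := Finset.card_nsmul_le_sum (C \ X) (fun i => (i:ℕ)+1)
          ((((C \ X).min' hD2ne) : ℕ) + 1) ?_
      · simpa using this
      · intro x hx
        have h := (C \ X).min'_le x hx
        rw [Fin.le_def] at h
        show (((C \ X).min' hD2ne) : ℕ) + 1 ≤ (x:ℕ) + 1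
        omega
    have hmm : (((X \ C).max' hD1ne) : ℕ) < (((C \ X).min' hD2ne) : ℕ) := by
      have h := hlt _ ((X \ C).max'_mem hD1ne) _ ((C \ X).min'_mem hD2ne)
      rw [Fin.lt_def] at h
      exact h
    have hD1pos : 0 < (X \ C).card := Finset.card_pos.mpr hD1ne
    calc ∑ i ∈ X \ C, ((i:ℕ)+1) ≤ (X \ C).card * ((((X \ C).max' hD1ne) : ℕ) + 1) := hub
      _ < (X \ C).card * ((((C \ X).min' hD2ne) : ℕ) + 1) :=
          (Nat.mul_lt_mul_left hD1pos).mpr (by omega)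
      _ = (C \ X).card * ((((C \ X).min' hD2ne) : ℕ) + 1) := by rw [hcards]
      _ ≤ ∑ i ∈ C \ X, ((i:ℕ)+1) := hlb
  have hXsplit := Finset.sum_inter_add_sum_sdiff X C (fun i => (i:ℕ)+1)
  have hCsplit := Finset.sum_inter_add_sum_sdiff C X (fun i => (i:ℕ)+1)
  rw [Finset.inter_comm] at hCsplit
  omega



variable {B : ℕ}

/-- per-test welfare with unit utilities -/
noncomputable def tw (q : Fin n → ℝ) (t : Finset (Fin n)) : ℝ :=
  (∏ i ∈ t, q i) * (t.card : ℝ)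

lemma sum_split {M : Type*} [AddCommMonoid M] (T : Fin B → Finset (Fin n)) (a : Fin B)
    (f : Finset (Fin n) → M) :
    ∑ j, f (T j) = f (T a) + ∑ j ∈ Finset.univ.erase a, f (T j) :=
  (Finset.add_sum_erase _ (fun j => f (T j)) (Finset.mem_univ a)).symm

lemma sum_split2 {M : Type*} [AddCommMonoid M] (T : Fin B → Finset (Fin n)) {a b : Fin B}
    (hab : a ≠ b) (f : Finset (Fin n) → M) :
    ∑ j, f (T j) = f (T a) + (f (T b) +
      ∑ j ∈ (Finset.univ.erase a).erase b, f (T j)) := by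
  rw [sum_split T a f]
  congr 1
  exact (Finset.add_sum_erase _ (fun j => f (T j))
    (Finset.mem_erase.mpr ⟨hab.symm, Finset.mem_univ b⟩)).symm

lemma sum_update1 {M : Type*} [AddCommMonoid M] (T : Fin B → Finset (Fin n)) (a : Fin B)
    (t' : Finset (Fin n)) (f : Finset (Fin n) → M) :
    ∑ j, f (Function.update T a t' j) =
      f t' + ∑ j ∈ Finset.univ.erase a, f (T j) := by
  rw [sum_split (Function.update T a t') a f, Function.update_self]
  congr 1
  refine Finset.sum_congr rfl ?_
  intro j hj
  rw [Function.update_of_ne (Finset.mem_erase.mp hj).1]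

lemma sum_update2 {M : Type*} [AddCommMonoid M] (T : Fin B → Finset (Fin n)) {a b : Fin B}
    (hab : a ≠ b) (ta' tb' : Finset (Fin n)) (f : Finset (Fin n) → M) :
    ∑ j, f (Function.update (Function.update T a ta') b tb' j) =
      f ta' + (f tb' + ∑ j ∈ (Finset.univ.erase a).erase b, f (T j)) := by
  rw [sum_split2 (Function.update (Function.update T a ta') b tb') hab f]
  rw [Function.update_of_ne hab, Function.update_self, Function.update_self]
  congr 2
  refine Finset.sum_congr rfl ?_
  intro j hj
  have h1 := (Finset.mem_erase.mp hj).1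
  have h2 := (Finset.mem_erase.mp (Finset.mem_erase.mp hj).2).1
  rw [Function.update_of_ne h1, Function.update_of_ne h2]

/-- index-sum of a test -/
def g (t : Finset (Fin n)) : ℕ := ∑ i ∈ t, ((i : ℕ) + 1)

lemma g_le (t : Finset (Fin n)) : g t ≤ n * n := by
  have h := Finset.sum_le_card_nsmul t (fun i => (i : ℕ) + 1) n ?_
  · have hc : t.card ≤ n := by
      have := Finset.card_le_univ t
      simpa using this
    simp only [smul_eq_mul] at h
    exact le_trans h (Nat.mul_le_mul_right n hc)
  · intro x _
    show (x:ℕ) + 1 ≤ n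
    have := x.isLt
    omega

lemma g_sq_le (t : Finset (Fin n)) : (g t)^2 ≤ (n+1)^4 := by
  have h := g_le t
  have h2 : g t ≤ (n+1)^2 := by nlinarith
  calc (g t)^2 ≤ ((n+1)^2)^2 := Nat.pow_le_pow_left h2 2
    _ = (n+1)^4 := by ring

/-- the lexicographic potential -/
def phi (n B : ℕ) (T : Fin B → Finset (Fin n)) : ℕ :=
  ((∑ j, g (T j)) * (B * (n+1)^4 + 1) + ∑ j, (T j).card * g (T j)) * (B * (n+1)^4 + 1)
    + ∑ j, ((n+1)^4 - (g (T j))^2)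

lemma phi2_lt (T : Fin B → Finset (Fin n)) :
    ∑ j, (T j).card * g (T j) < B * (n+1)^4 + 1 := by
  have h : ∀ j, (T j).card * g (T j) ≤ (n+1)^4 := by
    intro j
    have h1 : (T j).card ≤ n := by simpa using Finset.card_le_univ (T j)
    have h2 := g_le (T j)
    calc (T j).card * g (T j) ≤ n * (n * n) := Nat.mul_le_mul h1 h2
      _ ≤ (n+1)^4 := by nlinarith
  calc ∑ j, (T j).card * g (T j) ≤ ∑ _j : Fin B, (n+1)^4 :=
        Finset.sum_le_sum (fun j _ => h j)
    _ = B * (n+1)^4 := by simp [mul_comm]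
    _ < B * (n+1)^4 + 1 := by omega

lemma phi3_lt (T : Fin B → Finset (Fin n)) :
    ∑ j, ((n+1)^4 - (g (T j))^2) < B * (n+1)^4 + 1 := by
  calc ∑ j, ((n+1)^4 - (g (T j))^2) ≤ ∑ _j : Fin B, (n+1)^4 :=
        Finset.sum_le_sum (fun j _ => Nat.sub_le _ _)
    _ = B * (n+1)^4 := by simp [mul_comm]
    _ < B * (n+1)^4 + 1 := by omega

lemma lex_aux {K a a' b b' c c' : ℕ} (hb : b < K) (hb' : b' < K) (hc : c < K) (hc' : c' < K)
    (h : a' < a ∨ (a' = a ∧ (b' < b ∨ (b' = b ∧ c' < c)))) :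
    (a' * K + b') * K + c' < (a * K + b) * K + c := by
  have hK : 0 < K := by omega
  rcases h with h | h
  · have h1 : (a' * K + b') * K + c' < (a' * K + b' + 1) * K := by nlinarith
    have h2 : a' * K + b' + 1 ≤ a' * K + K := by omega
    have h3 : (a' * K + b' + 1) * K ≤ (a' * K + K) * K := Nat.mul_le_mul_right K h2
    have h4 : (a' * K + K) * K = (a' + 1) * K * K := by ring
    have h5 : (a' + 1) * K * K ≤ a * K * K := by
      have : a' + 1 ≤ a := h
      exact Nat.mul_le_mul_right K (Nat.mul_le_mul_right K this)
    have h6 : a * K * K ≤ (a * K + b) * K + c := by nlinarith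
    omega
  rcases h with ⟨heq, h⟩
  subst heq
  rcases h with h | ⟨heq2, h⟩
  · have h1 : (a' * K + b') * K + c' < (a' * K + b' + 1) * K := by nlinarith
    have h2 : a' * K + b' + 1 ≤ a' * K + b := by omega
    have h3 : (a' * K + b' + 1) * K ≤ (a' * K + b) * K := Nat.mul_le_mul_right K h2
    omega
  · subst heq2
    omega

lemma phi_lt_1 {T T' : Fin B → Finset (Fin n)}
    (h : ∑ j, g (T' j) < ∑ j, g (T j)) : phi n B T' < phi n B T :=
  lex_aux (phi2_lt T) (phi2_lt T') (phi3_lt T) (phi3_lt T') (Or.inl h)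

lemma phi_lt_2 {T T' : Fin B → Finset (Fin n)}
    (h1 : ∑ j, g (T' j) = ∑ j, g (T j))
    (h : ∑ j, (T' j).card * g (T' j) < ∑ j, (T j).card * g (T j)) :
    phi n B T' < phi n B T :=
  lex_aux (phi2_lt T) (phi2_lt T') (phi3_lt T) (phi3_lt T') (Or.inr ⟨h1, Or.inl h⟩)

lemma phi_lt_3 {T T' : Fin B → Finset (Fin n)}
    (h1 : ∑ j, g (T' j) = ∑ j, g (T j))
    (h2 : ∑ j, (T' j).card * g (T' j) = ∑ j, (T j).card * g (T j))
    (h : ∑ j, ((n+1)^4 - (g (T' j))^2) < ∑ j, ((n+1)^4 - (g (T j))^2)) :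
    phi n B T' < phi n B T :=
  lex_aux (phi2_lt T) (phi2_lt T') (phi3_lt T) (phi3_lt T') (Or.inr ⟨h1, Or.inr ⟨h2, h⟩⟩)

lemma disj_update1 {G : ℕ} {T : Fin B → Finset (Fin n)} {a : Fin B} {t' : Finset (Fin n)}
    (hTd : ∀ j k, j ≠ k → Disjoint (T j) (T k))
    (h1 : ∀ k, k ≠ a → Disjoint t' (T k)) :
    ∀ j k, j ≠ k → Disjoint (Function.update T a t' j) (Function.update T a t' k) := by
  intro j k hjk
  rcases eq_or_ne j a with rfl | hj
  · rw [Function.update_self, Function.update_of_ne hjk.symm]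
    exact h1 k hjk.symm
  · rw [Function.update_of_ne hj]
    rcases eq_or_ne k a with rfl | hk
    · rw [Function.update_self]
      exact (h1 j hj).symm
    · rw [Function.update_of_ne hk]; exact hTd j k hjk

lemma card_update1 {G : ℕ} {T : Fin B → Finset (Fin n)} {a : Fin B} {t' : Finset (Fin n)}
    (hTc : ∀ j, (T j).card ≤ G) (h2 : t'.card ≤ G) :
    ∀ j, (Function.update T a t' j).card ≤ G := by
  intro j
  rcases eq_or_ne j a with rfl | hj
  · rw [Function.update_self]; exact h2
  · rw [Function.update_of_ne hj]; exact hTc j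

lemma update2_val {T : Fin B → Finset (Fin n)} {a b : Fin B} (hab : a ≠ b)
    {ta' tb' : Finset (Fin n)} (j : Fin B) :
    Function.update (Function.update T a ta') b tb' j =
      if j = b then tb' else if j = a then ta' else T j := by
  rcases eq_or_ne j b with rfl | h1
  · simp
  · rw [Function.update_of_ne h1, if_neg h1]
    rcases eq_or_ne j a with rfl | h2
    · simp
    · rw [Function.update_of_ne h2, if_neg h2]

lemma disj_update2 {T : Fin B → Finset (Fin n)} {a b : Fin B} (hab : a ≠ b)
    {ta' tb' : Finset (Fin n)}
    (hTd : ∀ j k, j ≠ k → Disjoint (T j) (T k)) (hab' : Disjoint ta' tb')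
    (h1 : ∀ k, k ≠ a → k ≠ b → Disjoint ta' (T k))
    (h2 : ∀ k, k ≠ a → k ≠ b → Disjoint tb' (T k)) :
    ∀ j k, j ≠ k → Disjoint (Function.update (Function.update T a ta') b tb' j)
      (Function.update (Function.update T a ta') b tb' k) := by
  intro j k hjk
  rw [update2_val hab, update2_val hab]
  rcases eq_or_ne j b with hjb | hjb
  · rw [if_pos hjb]
    rcases eq_or_ne k b with hkb | hkb
    · exact absurd (hjb.trans hkb.symm) hjk
    · rw [if_neg hkb]
      rcases eq_or_ne k a with hka | hka
      · rw [if_pos hka]; exact hab'.symm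
      · rw [if_neg hka]; exact h2 k hka hkb
  · rw [if_neg hjb]
    rcases eq_or_ne j a with hja | hja
    · rw [if_pos hja]
      rcases eq_or_ne k b with hkb | hkb
      · rw [if_pos hkb]; exact hab'
      · rw [if_neg hkb]
        rcases eq_or_ne k a with hka | hka
        · exact absurd (hja.trans hka.symm) hjk
        · rw [if_neg hka]; exact h1 k hka hkb
    · rw [if_neg hja]
      rcases eq_or_ne k b with hkb | hkb
      · rw [if_pos hkb]; exact (h2 j hja hjb).symm
      · rw [if_neg hkb]
        rcases eq_or_ne k a with hka | hka
        · rw [if_pos hka]; exact (h1 j hja hjb).symm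
        · rw [if_neg hka]; exact hTd j k hjk

lemma card_update2 {G : ℕ} {T : Fin B → Finset (Fin n)} {a b : Fin B} (hab : a ≠ b)
    {ta' tb' : Finset (Fin n)}
    (hTc : ∀ j, (T j).card ≤ G) (h1 : ta'.card ≤ G) (h2 : tb'.card ≤ G) :
    ∀ j, (Function.update (Function.update T a ta') b tb' j).card ≤ G := by
  intro j
  rw [update2_val hab]
  split_ifs <;> first | exact h2 | exact h1 | exact hTc j

end S14

/-- With identical utilities and individuals sorted by decreasing healthy-probability,
some optimal non-overlapping regime consists of consecutive intervals of individuals,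
with test sizes ordered decreasingly. -/
theorem stmt14 {n B G : ℕ} (q : Fin n → ℝ)
    (hq : ∀ i, 0 ≤ q i ∧ q i ≤ 1) (hsort : ∀ i j : Fin n, i ≤ j → q j ≤ q i) :
    ∃ T : Fin B → Finset (Fin n),
      (∀ j k, j ≠ k → Disjoint (T j) (T k)) ∧ (∀ j, (T j).card ≤ G) ∧
      (∀ T' : Fin B → Finset (Fin n),
        (∀ j k, j ≠ k → Disjoint (T' j) (T' k)) → (∀ j, (T' j).card ≤ G) →
          noWelfare q (fun _ => 1) T' ≤ noWelfare q (fun _ => 1) T) ∧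
      (∀ j k : Fin B, j ≤ k → (T k).card ≤ (T j).card) ∧
      (∀ j : Fin B, ∀ i : Fin n,
        i ∈ T j ↔
          (∑ k ∈ Finset.univ.filter fun k => k < j, (T k).card) ≤ (i : ℕ) ∧
            (i : ℕ) <
              (∑ k ∈ Finset.univ.filter fun k => k < j, (T k).card) + (T j).card) := by
    classical
  set F : (Fin B → Finset (Fin n)) → ℝ := noWelfare q (fun _ => 1) with hFdef
  have hFeq : ∀ T : Fin B → Finset (Fin n), F T = ∑ j, S14.tw q (T j) := by
    intro T
    rw [hFdef]
    unfold noWelfare S14.tw testWelfare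
    refine Finset.sum_congr rfl (fun j _ => ?_)
    simp
  set A : Finset (Fin B → Finset (Fin n)) :=
    Finset.univ.filter
      (fun T => (∀ j k, j ≠ k → Disjoint (T j) (T k)) ∧ ∀ j, (T j).card ≤ G) with hA
  have hA0 : (fun _ : Fin B => (∅ : Finset (Fin n))) ∈ A := by
    rw [hA]
    exact Finset.mem_filter.mpr ⟨Finset.mem_univ _, fun j k h => by simp, fun j => by simp⟩
  obtain ⟨T0, hT0A, hT0max⟩ := Finset.exists_max_image A F ⟨_, hA0⟩
  set A' : Finset (Fin B → Finset (Fin n)) := A.filter (fun T' => F T0 ≤ F T') with hA'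
  obtain ⟨T, hTA', hTmin⟩ := Finset.exists_min_image A' (S14.phi n B)
    ⟨T0, by rw [hA']; exact Finset.mem_filter.mpr ⟨hT0A, le_refl _⟩⟩
  rw [hA'] at hTA'
  obtain ⟨hTA, hTF⟩ := Finset.mem_filter.mp hTA'
  obtain ⟨-, hTd, hTc⟩ := Finset.mem_filter.mp hTA
  have hTopt : ∀ T' : Fin B → Finset (Fin n),
      (∀ j k, j ≠ k → Disjoint (T' j) (T' k)) → (∀ j, (T' j).card ≤ G) → F T' ≤ F T :=
    fun T' h1 h2 =>
      le_trans (hT0max T' (Finset.mem_filter.mpr ⟨Finset.mem_univ _, h1, h2⟩)) hTF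
  have hTphi : ∀ T' : Fin B → Finset (Fin n),
      (∀ j k, j ≠ k → Disjoint (T' j) (T' k)) → (∀ j, (T' j).card ≤ G) →
      F T ≤ F T' → S14.phi n B T ≤ S14.phi n B T' := by
    intro T' h1 h2 h3
    refine hTmin T' ?_
    rw [hA']
    exact Finset.mem_filter.mpr
      ⟨Finset.mem_filter.mpr ⟨Finset.mem_univ _, h1, h2⟩, le_trans hTF h3⟩
  -- (C2) every tested individual has positive healthy-probability
  have hC2 : ∀ a : Fin B, ∀ i ∈ T a, 0 < q i := by
    intro a i hi
    rcases lt_or_eq_of_le (hq i).1 with h | h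
    · exact h
    exfalso
    have hq0 : q i = 0 := h.symm
    have hd' := S14.disj_update1 (G := G) (a := a) (t' := (∅ : Finset (Fin n))) hTd
      (fun k _ => disjoint_bot_left)
    have hc' := S14.card_update1 (G := G) (a := a) (t' := (∅ : Finset (Fin n))) hTc
      (by simp)
    have hW : F T ≤ F (Function.update T a ∅) := by
      rw [hFeq, hFeq, S14.sum_update1, S14.sum_split T a (S14.tw q)]
      have h1 : S14.tw q (T a) = 0 := by
        rw [S14.tw, Finset.prod_eq_zero hi hq0]
        ring
      have h2 : S14.tw q (∅ : Finset (Fin n)) = 0 := by simp [S14.tw]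
      rw [h1, h2]
    have hphi := hTphi _ hd' hc' hW
    have hlt : S14.phi n B (Function.update T a ∅) < S14.phi n B T := by
      refine S14.phi_lt_1 ?_
      rw [S14.sum_update1, S14.sum_split T a S14.g]
      have h3 : 0 < S14.g (T a) :=
        Finset.sum_pos (fun x _ => by omega) ⟨i, hi⟩
      have h4 : S14.g (∅ : Finset (Fin n)) = 0 := by simp [S14.g]
      omega
    omega
  -- (C3) members of a test of size s have q ≥ 1 - 1/s
  have hC3 : ∀ a : Fin B, ∀ i ∈ T a, 1 - 1/((T a).card : ℝ) ≤ q i := by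
    intro a i hi
    have hcard : 1 ≤ (T a).card := Finset.card_pos.mpr ⟨i, hi⟩
    have hd' := S14.disj_update1 (G := G) (a := a) (t' := (T a).erase i) hTd
      (fun k hk => Finset.disjoint_of_subset_left (Finset.erase_subset _ _)
        (hTd a k (Ne.symm hk)))
    have hc' := S14.card_update1 (G := G) (a := a) (t' := (T a).erase i) hTc
      (le_trans (Finset.card_le_card (Finset.erase_subset _ _)) (hTc a))
    have hWle : F (Function.update T a ((T a).erase i)) ≤ F T := hTopt _ hd' hc'
    rw [hFeq, hFeq, S14.sum_update1, S14.sum_split T a (S14.tw q)] at hWle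
    have h2 : S14.tw q ((T a).erase i) ≤ S14.tw q (T a) := by linarith
    have hprod : ∏ x ∈ T a, q x = q i * ∏ x ∈ (T a).erase i, q x :=
      (Finset.mul_prod_erase _ _ hi).symm
    have hPpos : 0 < ∏ x ∈ (T a).erase i, q x :=
      Finset.prod_pos (fun x hx => hC2 a x (Finset.erase_subset _ _ hx))
    have hcard' : (((T a).erase i).card : ℝ) = ((T a).card : ℝ) - 1 := by
      rw [Finset.card_erase_of_mem hi, Nat.cast_sub hcard, Nat.cast_one]
    simp only [S14.tw] at h2
    rw [hprod, hcard'] at h2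
    have hre : q i * (∏ x ∈ (T a).erase i, q x) * ((T a).card : ℝ) =
        (∏ x ∈ (T a).erase i, q x) * (q i * ((T a).card : ℝ)) := by ring
    rw [hre] at h2
    have hgoal : ((T a).card : ℝ) - 1 ≤ q i * ((T a).card : ℝ) :=
      le_of_mul_le_mul_left h2 hPpos
    have hcpos : (0:ℝ) < ((T a).card : ℝ) := by exact_mod_cast hcard
    have h5 : 1 - 1/((T a).card : ℝ) = (((T a).card : ℝ) - 1)/((T a).card : ℝ) := by
      field_simp
    rw [h5, div_le_iff₀ hcpos]
    nlinarith
  -- (C1) the tested set is downward closed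
  have hC1 : ∀ i i' : Fin n, i < i' → (∃ a, i' ∈ T a) → (∃ a, i ∈ T a) := by
    rintro i i' hlt ⟨a, hi'⟩
    by_contra hfree
    push_neg at hfree
    have hiTa : i ∉ (T a).erase i' := fun h => hfree a (Finset.erase_subset _ _ h)
    have hd0 : ∀ k, k ≠ a → Disjoint (insert i ((T a).erase i')) (T k) := by
      intro k hk
      rw [Finset.disjoint_left]
      intro x hx hxk
      rcases Finset.mem_insert.mp hx with rfl | hx'
      · exact hfree k hxk
      · exact (Finset.disjoint_left.mp (hTd a k (Ne.symm hk)))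
          (Finset.erase_subset _ _ hx') hxk
    have hcardt' : (insert i ((T a).erase i')).card = (T a).card := by
      rw [Finset.card_insert_of_notMem hiTa, Finset.card_erase_of_mem hi']
      have h1 : 1 ≤ (T a).card := Finset.card_pos.mpr ⟨i', hi'⟩
      omega
    have hd' := S14.disj_update1 (G := G) (a := a) hTd hd0
    have hc' := S14.card_update1 (G := G) (a := a) hTc (hcardt' ▸ hTc a)
    have hW : F T ≤ F (Function.update T a (insert i ((T a).erase i'))) := by
      rw [hFeq, hFeq, S14.sum_update1, S14.sum_split T a (S14.tw q)]
      have hineq : S14.tw q (T a) ≤ S14.tw q (insert i ((T a).erase i')) := by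
        simp only [S14.tw]
        rw [hcardt']
        refine mul_le_mul_of_nonneg_right ?_ (by positivity)
        rw [Finset.prod_insert hiTa, ← Finset.mul_prod_erase _ _ hi']
        exact mul_le_mul_of_nonneg_right (hsort i i' (le_of_lt hlt))
          (Finset.prod_nonneg (fun x _ => (hq x).1))
      linarith
    have hphi := hTphi _ hd' hc' hW
    have hlt' : S14.phi n B (Function.update T a (insert i ((T a).erase i'))) <
        S14.phi n B T := by
      refine S14.phi_lt_1 ?_
      rw [S14.sum_update1, S14.sum_split T a S14.g]
      have hgg : S14.g (insert i ((T a).erase i')) < S14.g (T a) := by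
        simp only [S14.g]
        rw [Finset.sum_insert hiTa, ← Finset.add_sum_erase _ _ hi']
        have h6 : (i:ℕ) < (i':ℕ) := hlt
        omega
      omega
    omega
  -- the pair-sorting move: contradiction whenever it strictly improves the potential
  have hpair : ∀ a b : Fin B, a ≠ b → (T a).card ≤ (T b).card →
      S14.low (T a ∪ T b) (T b).card ≠ T b →
      ((T a).card < (T b).card ∨ S14.low (T a ∪ T b) (T b).card ≠ T a) → False := by
    intro a b hab hcard hXb hcase
    set S : Finset (Fin n) := T a ∪ T b with hS
    set X : Finset (Fin n) := S14.low S (T b).card with hX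
    set Y : Finset (Fin n) := S \ X with hY
    have hSd : Disjoint (T a) (T b) := hTd a b hab
    have hScard : S.card = (T a).card + (T b).card := Finset.card_union_of_disjoint hSd
    have hXS : X ⊆ S := S14.low_subset S (T b).card
    have hXcard : X.card = (T b).card := S14.low_card S (T b).card (by omega)
    have hYcard : Y.card = (T a).card := by
      rw [hY, Finset.card_sdiff_of_subset hXS, hXcard]; omega
    have hdisjS : ∀ k, k ≠ a → k ≠ b → Disjoint S (T k) := by
      intro k hka hkb
      rw [hS, Finset.disjoint_union_left]
      exact ⟨hTd a k (Ne.symm hka), hTd b k (Ne.symm hkb)⟩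
    have hd' := S14.disj_update2 hab hTd
      (Finset.sdiff_disjoint (s := X) (t := S))
      (fun k hka hkb => Finset.disjoint_of_subset_left Finset.sdiff_subset
        (hdisjS k hka hkb))
      (fun k hka hkb => Finset.disjoint_of_subset_left hXS (hdisjS k hka hkb))
    have hc' := S14.card_update2 hab hTc (hYcard ▸ hTc a) (hXcard ▸ hTc b)
    set T' := Function.update (Function.update T a Y) b X with hT'
    have hps := S14.pair_sort q hq hsort hSd hcard (hC3 b)
    have hps' : (∏ i ∈ T a, q i) * ((T a).card : ℝ) +
        (∏ i ∈ T b, q i) * ((T b).card : ℝ) ≤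
        (∏ i ∈ Y, q i) * ((Y.card : ℕ) : ℝ) + (∏ i ∈ X, q i) * ((X.card : ℕ) : ℝ) := by
      rw [hYcard, hXcard]
      have h9 := hps
      rw [← hS, ← hX, ← hY] at h9
      linarith
    have hW : F T ≤ F T' := by
      rw [hFeq, hFeq, hT', S14.sum_update2 T hab, S14.sum_split2 T hab (S14.tw q)]
      simp only [S14.tw]
      linarith
    have hphi := hTphi _ hd' hc' hW
    -- index sums
    have hgsum : S14.g Y + S14.g X = S14.g (T a) + S14.g (T b) := by
      have h1 : S14.g Y + S14.g X = S14.g S := by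
        simp only [S14.g, hY]
        exact Finset.sum_sdiff hXS
      have h2 : S14.g S = S14.g (T a) + S14.g (T b) := by
        simp only [S14.g, hS]
        exact Finset.sum_union hSd
      omega
    have hgXb : S14.g X < S14.g (T b) := by
      simp only [S14.g, hX]
      exact S14.low_sum_lt Finset.subset_union_right rfl (by omega) (fun h => hXb h.symm)
    have hphi1 : (∑ j, S14.g (T' j)) = ∑ j, S14.g (T j) := by
      rw [hT', S14.sum_update2 T hab, S14.sum_split2 T hab S14.g]
      omega
    rcases lt_or_eq_of_le hcard with hlt | hcardeq
    · -- strictly smaller card: phi2 strictly decreases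
      have hphi2 : (∑ j, (T' j).card * S14.g (T' j)) <
          ∑ j, (T j).card * S14.g (T j) := by
        rw [hT', S14.sum_update2 T hab (f := fun t => t.card * S14.g t),
          S14.sum_split2 T hab (f := fun t => t.card * S14.g t)]
        rw [hYcard, hXcard]
        obtain ⟨c, hc⟩ := Nat.exists_eq_add_of_lt hlt
        have hcpos : 0 < c + 1 := Nat.succ_pos c
        have e1 : (T a).card * S14.g Y + (T b).card * S14.g X =
            (T a).card * (S14.g Y + S14.g X) + (c+1) * S14.g X := by
          rw [hc]; ring
        have e2 : (T a).card * S14.g (T a) + (T b).card * S14.g (T b) =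
            (T a).card * (S14.g (T a) + S14.g (T b)) + (c+1) * S14.g (T b) := by
          rw [hc]; ring
        have e3 : (c+1) * S14.g X < (c+1) * S14.g (T b) :=
          (Nat.mul_lt_mul_left hcpos).mpr hgXb
        have e0 : (T a).card * (S14.g Y + S14.g X) =
            (T a).card * (S14.g (T a) + S14.g (T b)) := by rw [hgsum]
        omega
      exact absurd (S14.phi_lt_2 hphi1 hphi2) (by omega)
    · -- equal cards: phi3 strictly decreases
      have hXa : X ≠ T a := by
        rcases hcase with h | h
        · omega
        · exact h
      have hgXa : S14.g X < S14.g (T a) := by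
        simp only [S14.g, hX]
        exact S14.low_sum_lt Finset.subset_union_left hcardeq (by omega)
          (fun h => hXa h.symm)
      have hphi2eq : (∑ j, (T' j).card * S14.g (T' j)) =
          ∑ j, (T j).card * S14.g (T j) := by
        rw [hT', S14.sum_update2 T hab (f := fun t => t.card * S14.g t),
          S14.sum_split2 T hab (f := fun t => t.card * S14.g t)]
        rw [hYcard, hXcard, ← hcardeq]
        have h1 : (T a).card * S14.g Y + (T a).card * S14.g X =
            (T a).card * S14.g (T a) + (T a).card * S14.g (T b) := by
          rw [← Nat.mul_add, ← Nat.mul_add, hgsum]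
        omega
      have hphi3 : (∑ j, ((n+1)^4 - (S14.g (T' j))^2)) <
          ∑ j, ((n+1)^4 - (S14.g (T j))^2) := by
        rw [hT', S14.sum_update2 T hab (f := fun t => (n+1)^4 - (S14.g t)^2),
          S14.sum_split2 T hab (f := fun t => (n+1)^4 - (S14.g t)^2)]
        have hsq : (S14.g (T a))^2 + (S14.g (T b))^2 < (S14.g Y)^2 + (S14.g X)^2 := by
          obtain ⟨a', ha'⟩ := Nat.exists_eq_add_of_lt hgXa
          obtain ⟨b', hb'⟩ := Nat.exists_eq_add_of_lt hgXb
          have hgY : S14.g Y = S14.g X + (a'+1) + (b'+1) := by omega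
          rw [ha', hb', hgY]
          nlinarith [Nat.succ_pos a', Nat.succ_pos b']
        have c1 := S14.g_sq_le (T a)
        have c2 := S14.g_sq_le (T b)
        have c3 := S14.g_sq_le X
        have c4 := S14.g_sq_le Y
        omega
      exact absurd (S14.phi_lt_3 hphi1 hphi2eq hphi3) (by omega)
  -- (F2) a strictly bigger test lies entirely below a smaller one
  have hF2 : ∀ a b : Fin B, a ≠ b → (T a).card < (T b).card →
      ∀ i ∈ T a, ∀ i' ∈ T b, i' < i := by
    intro a b hab hlt i hi i' hi'
    by_contra hnot
    push_neg at hnot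
    have hne : i ≠ i' := by
      intro h
      exact Finset.disjoint_left.mp (hTd a b hab) hi (h ▸ hi')
    have hii' : i < i' := lt_of_le_of_ne hnot hne
    refine hpair a b hab (le_of_lt hlt) ?_ (Or.inl hlt)
    intro hXb
    have hiS : i ∈ T a ∪ T b := Finset.mem_union_left _ hi
    have hiX : i ∉ S14.low (T a ∪ T b) (T b).card := by
      rw [hXb]
      intro h
      exact Finset.disjoint_left.mp (hTd a b hab) hi h
    have := S14.low_lt (T a ∪ T b) (T b).card (hXb ▸ hi') hiS hiX
    omega
  -- (F3) comparability of distinct nonempty tests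
  have hcomp : ∀ a b : Fin B, a ≠ b → (T a).Nonempty → (T b).Nonempty →
      (∀ i ∈ T a, ∀ i' ∈ T b, i < i') ∨ (∀ i ∈ T a, ∀ i' ∈ T b, i' < i) := by
    intro a b hab hane hbne
    by_contra hor
    push_neg at hor
    obtain ⟨⟨i1, hi1, i1', hi1', hni1⟩, ⟨i2, hi2, i2', hi2', hni2⟩⟩ := hor
    have hne1 : i1 ≠ i1' := fun h =>
      Finset.disjoint_left.mp (hTd a b hab) hi1 (h ▸ hi1')
    have hne2 : i2 ≠ i2' := fun h =>
      Finset.disjoint_left.mp (hTd a b hab) hi2 (h ▸ hi2')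
    have h1 : i1' < i1 := lt_of_le_of_ne hni1 (Ne.symm hne1)
    have h2 : i2 < i2' := lt_of_le_of_ne hni2 hne2
    rcases lt_trichotomy (T a).card (T b).card with hlt | heq | hgt
    · exact absurd (hF2 a b hab hlt i2 hi2 i2' hi2') (by omega)
    · refine hpair a b hab (le_of_eq heq) ?_ (Or.inr ?_)
      · intro hXb
        have hiS : i2 ∈ T a ∪ T b := Finset.mem_union_left _ hi2
        have hiX : i2 ∉ S14.low (T a ∪ T b) (T b).card := by
          rw [hXb]
          intro h
          exact Finset.disjoint_left.mp (hTd a b hab) hi2 h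
        have := S14.low_lt (T a ∪ T b) (T b).card (hXb ▸ hi2') hiS hiX
        omega
      · intro hXa
        have hiS : i1' ∈ T a ∪ T b := Finset.mem_union_right _ hi1'
        have hiX : i1' ∉ S14.low (T a ∪ T b) (T b).card := by
          rw [hXa]
          intro h
          exact Finset.disjoint_left.mp (hTd a b hab) h hi1'
        have := S14.low_lt (T a ∪ T b) (T b).card (hXa ▸ hi1) hiS hiX
        omega
    · exact absurd (hF2 b a (Ne.symm hab) hgt i1' hi1' i1 hi1) (by omega)
  -- the set of tested individuals is an initial segment
  set U : Finset (Fin n) := Finset.univ.biUnion T with hU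
  have hUmem : ∀ i : Fin n, i ∈ U ↔ ∃ a, i ∈ T a := by
    intro i; rw [hU]; simp [Finset.mem_biUnion]
  have hUcard : U.card = ∑ j, (T j).card := by
    rw [hU]; exact Finset.card_biUnion (fun j _ k _ hjk => hTd j k hjk)
  have hdown : ∀ i i' : Fin n, i ≤ i' → i' ∈ U → i ∈ U := by
    intro i i' hle hi'
    rcases eq_or_lt_of_le hle with rfl | hlt
    · exact hi'
    · rw [hUmem] at hi' ⊢
      exact hC1 i i' hlt hi'
  have hUseg : ∀ i : Fin n, i ∈ U ↔ (i : ℕ) < U.card := by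
    intro i
    constructor
    · intro hi
      have hsub : Finset.Iic i ⊆ U := fun x hx => hdown x i (Finset.mem_Iic.mp hx) hi
      have hle := Finset.card_le_card hsub
      rw [Fin.card_Iic] at hle
      omega
    · intro hi
      by_contra hnot
      have hsub : U ⊆ Finset.Iio i := by
        intro x hx
        rw [Finset.mem_Iio]
        by_contra hxi
        push_neg at hxi
        exact hnot (hdown i x hxi hx)
      have hle := Finset.card_le_card hsub
      rw [Fin.card_Iio] at hle
      omega
  -- sort the tests spatially
  set key : Fin B → ℕ :=
    fun j => if h : (T j).Nonempty then ((T j).min' h : ℕ) else n with hkeydef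
  set σ : Equiv.Perm (Fin B) := Tuple.sort key with hσ
  have hmono : Monotone (key ∘ σ) := by rw [hσ]; exact Tuple.monotone_sort key
  have hkey_pos : ∀ j (h : (T j).Nonempty), key j = ((T j).min' h : ℕ) := by
    intro j h; exact dif_pos h
  have hkey_neg : ∀ j, ¬ (T j).Nonempty → key j = n := by
    intro j h; exact dif_neg h
  have horder : ∀ a b : Fin B, a ≠ b → ∀ (ha : (T a).Nonempty) (hb : (T b).Nonempty),
      key a ≤ key b → ∀ i ∈ T a, ∀ i' ∈ T b, i < i' := by
    intro a b hab ha hb hle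
    rcases hcomp a b hab ha hb with h | h
    · exact h
    · exfalso
      have h1 : (T b).min' hb < (T a).min' ha :=
        h _ ((T a).min'_mem ha) _ ((T b).min'_mem hb)
      have h2 := hkey_pos a ha
      have h3 := hkey_pos b hb
      rw [Fin.lt_def] at h1
      omega
  -- the forward inclusion
  have hforward : ∀ j' : Fin B, ∀ x : Fin n, x ∈ T (σ j') →
      (∑ k ∈ Finset.univ.filter (fun k => k < j'), (T (σ k)).card) ≤ (x : ℕ) ∧
      (x : ℕ) <
        (∑ k ∈ Finset.univ.filter (fun k => k < j'), (T (σ k)).card) + (T (σ j')).card := by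
    intro j' x hx
    have hj'ne : (T (σ j')).Nonempty := ⟨x, hx⟩
    have hxU : x ∈ U := (hUmem x).mpr ⟨σ j', hx⟩
    have hxval : (x : ℕ) = (U.filter (fun y => y < x)).card := by
      have heq : U.filter (fun y => y < x) = Finset.Iio x := by
        ext y
        simp only [Finset.mem_filter, Finset.mem_Iio]
        constructor
        · tauto
        · intro hy
          refine ⟨?_, hy⟩
          rw [hUseg]
          have hxc : (x : ℕ) < U.card := (hUseg x).mp hxU
          have hyx : (y : ℕ) < (x : ℕ) := hy
          omega
      rw [heq, Fin.card_Iio]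
    have hdecomp : (U.filter (fun y => y < x)).card =
        ∑ k, ((T (σ k)).filter (fun y => y < x)).card := by
      have h1 : U.filter (fun y => y < x) =
          Finset.univ.biUnion (fun k => (T (σ k)).filter (fun y => y < x)) := by
        ext y
        simp only [Finset.mem_filter, Finset.mem_biUnion, Finset.mem_univ, true_and]
        constructor
        · rintro ⟨hyU, hyx⟩
          obtain ⟨a, hya⟩ := (hUmem y).mp hyU
          exact ⟨σ.symm a, ⟨by rw [Equiv.apply_symm_apply]; exact hya, hyx⟩⟩
        · rintro ⟨k, hyk, hyx⟩
          exact ⟨(hUmem y).mpr ⟨σ k, hyk⟩, hyx⟩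
      rw [h1]
      exact Finset.card_biUnion (fun j _ k _ hjk =>
        Finset.disjoint_filter_filter (hTd _ _ (fun h => hjk (σ.injective h))))
    -- split the sum at j'
    have hsplit : ∑ k, ((T (σ k)).filter (fun y => y < x)).card =
        (∑ k ∈ Finset.univ.filter (fun k => k < j'),
          ((T (σ k)).filter (fun y => y < x)).card) +
        (((T (σ j')).filter (fun y => y < x)).card +
          ∑ k ∈ Finset.univ.filter (fun k => j' < k),
            ((T (σ k)).filter (fun y => y < x)).card) := by
      rw [← Finset.sum_filter_add_sum_filter_not Finset.univ (fun k => k < j')]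
      congr 1
      have h2 : Finset.univ.filter (fun k => ¬ k < j') =
          insert j' (Finset.univ.filter (fun k => j' < k)) := by
        ext k
        simp only [Finset.mem_filter, Finset.mem_univ, true_and, Finset.mem_insert]
        constructor
        · intro h
          rcases eq_or_ne k j' with rfl | hne
          · exact Or.inl rfl
          · exact Or.inr (lt_of_le_of_ne (not_lt.mp h) (Ne.symm hne))
        · rintro (rfl | h)
          · exact lt_irrefl _
          · exact not_lt.mpr (le_of_lt h)
      rw [h2, Finset.sum_insert (by simp)]
  -- values of the three parts
    have hterm_lt : ∀ k, k < j' →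
        ((T (σ k)).filter (fun y => y < x)).card = (T (σ k)).card := by
      intro k hk
      congr 1
      refine Finset.filter_true_of_mem ?_
      intro y hy
      have hne : σ k ≠ σ j' := fun h => (ne_of_lt hk) (σ.injective h)
      have hkne : (T (σ k)).Nonempty := ⟨y, hy⟩
      exact horder (σ k) (σ j') hne hkne hj'ne (hmono (le_of_lt hk)) y hy x hx
    have hterm_gt : ∀ k, j' < k →
        ((T (σ k)).filter (fun y => y < x)).card = 0 := by
      intro k hk
      rw [Finset.card_eq_zero]
      rw [Finset.filter_eq_empty_iff]
      intro y hy
      have hne : σ j' ≠ σ k := fun h => (ne_of_lt hk) (σ.injective h)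
      have hkne : (T (σ k)).Nonempty := ⟨y, hy⟩
      have := horder (σ j') (σ k) hne hj'ne hkne (hmono (le_of_lt hk)) x hx y hy
      exact not_lt.mpr (le_of_lt this)
    have hterm_eq : ((T (σ j')).filter (fun y => y < x)).card < (T (σ j')).card := by
      refine Finset.card_lt_card ?_
      rw [Finset.ssubset_iff_of_subset (Finset.filter_subset _ _)]
      exact ⟨x, hx, by simp⟩
    have hsum_lt : (∑ k ∈ Finset.univ.filter (fun k => k < j'),
        ((T (σ k)).filter (fun y => y < x)).card) =
        ∑ k ∈ Finset.univ.filter (fun k => k < j'), (T (σ k)).card :=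
      Finset.sum_congr rfl (fun k hk => hterm_lt k (Finset.mem_filter.mp hk).2)
    have hsum_gt : (∑ k ∈ Finset.univ.filter (fun k => j' < k),
        ((T (σ k)).filter (fun y => y < x)).card) = 0 :=
      Finset.sum_eq_zero (fun k hk => hterm_gt k (Finset.mem_filter.mp hk).2)
    omega
  -- total size
  have htot : ∑ k, (T (σ k)).card = U.card := by
    rw [hUcard]
    exact Equiv.sum_comp σ (fun j => (T j).card)
  have hoffmono : ∀ j k : Fin B, j < k →
      (∑ l ∈ Finset.univ.filter (fun l => l < j), (T (σ l)).card) + (T (σ j)).card ≤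
        ∑ l ∈ Finset.univ.filter (fun l => l < k), (T (σ l)).card := by
    intro j k hjk
    have hsub : insert j (Finset.univ.filter (fun l => l < j)) ⊆
        Finset.univ.filter (fun l => l < k) := by
      intro l hl
      rcases Finset.mem_insert.mp hl with rfl | hl'
      · exact Finset.mem_filter.mpr ⟨Finset.mem_univ _, hjk⟩
      · exact Finset.mem_filter.mpr ⟨Finset.mem_univ _,
          lt_trans (Finset.mem_filter.mp hl').2 hjk⟩
    have h9 : ∑ l ∈ insert j (Finset.univ.filter (fun l => l < j)), (T (σ l)).card ≤
        ∑ l ∈ Finset.univ.filter (fun l => l < k), (T (σ l)).card :=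
      Finset.sum_le_sum_of_subset hsub
    rw [Finset.sum_insert (by simp)] at h9
    omega
  have hofftot : ∀ j : Fin B,
      (∑ l ∈ Finset.univ.filter (fun l => l < j), (T (σ l)).card) + (T (σ j)).card ≤
        ∑ l, (T (σ l)).card := by
    intro j
    have hsub : insert j (Finset.univ.filter (fun l => l < j)) ⊆ Finset.univ :=
      Finset.subset_univ _
    have h9 : ∑ l ∈ insert j (Finset.univ.filter (fun l => l < j)), (T (σ l)).card ≤
        ∑ l, (T (σ l)).card :=
      Finset.sum_le_sum_of_subset hsub
    rw [Finset.sum_insert (by simp)] at h9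
    omega
  refine ⟨fun j => T (σ j), fun j k hjk => hTd _ _ (fun h => hjk (σ.injective h)),
    fun j => hTc _, ?_, ?_, ?_⟩
  · -- optimality
    intro T' h1 h2
    have h3 := hTopt T' h1 h2
    have h4 : noWelfare q (fun _ => 1) (fun j => T (σ j)) = F T := by
      rw [hFdef]
      unfold noWelfare
      exact Equiv.sum_comp σ (fun j => testWelfare q (fun _ => 1) (T j))
    calc noWelfare q (fun _ => 1) T' = F T' := rfl
      _ ≤ F T := h3
      _ = noWelfare q (fun _ => 1) (fun j => T (σ j)) := h4.symm
  · -- decreasing sizes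
    intro j k hjk
    change (T (σ k)).card ≤ (T (σ j)).card
    rcases Finset.eq_empty_or_nonempty (T (σ k)) with hk | hk
    · simp [hk]
    · have hkey_le : key (σ j) ≤ key (σ k) := hmono hjk
      have hj : (T (σ j)).Nonempty := by
        by_contra hempty
        have h5 := hkey_neg (σ j) hempty
        have h6 := hkey_pos (σ k) hk
        have h7 := ((T (σ k)).min' hk).isLt
        omega
      rcases eq_or_ne (σ j) (σ k) with heq | hne
      · rw [heq]
      · by_contra hlt
        push_neg at hlt
        have hall := hF2 (σ j) (σ k) hne hlt
        have h1 : (T (σ k)).min' hk < (T (σ j)).min' hj :=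
          hall _ ((T (σ j)).min'_mem hj) _ ((T (σ k)).min'_mem hk)
        have h2 := hkey_pos (σ j) hj
        have h3 := hkey_pos (σ k) hk
        rw [Fin.lt_def] at h1
        omega
  · -- interval structure
    intro j i
    change i ∈ T (σ j) ↔
      (∑ k ∈ Finset.univ.filter fun k => k < j, (T (σ k)).card) ≤ (i : ℕ) ∧
        (i : ℕ) < (∑ k ∈ Finset.univ.filter fun k => k < j, (T (σ k)).card) + (T (σ j)).card
    constructor
    · intro hi
      exact hforward j i hi
    · rintro ⟨h1, h2⟩
      have him : (i : ℕ) < U.card := by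
        have h5 := hofftot j
        omega
      have hiU : i ∈ U := (hUseg i).mpr him
      obtain ⟨a, hia⟩ := (hUmem i).mp hiU
      have hik : i ∈ T (σ (σ.symm a)) := by
        rw [Equiv.apply_symm_apply]; exact hia
      have hfk := hforward (σ.symm a) i hik
      rcases eq_or_ne (σ.symm a) j with heq | hkj
      · subst heq; exact hik
      · exfalso
        rcases lt_or_gt_of_ne hkj with hlt | hgt
        · have := hoffmono (σ.symm a) j hlt
          omega
        · have := hoffmono j (σ.symm a) hgt
          omega
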